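/- For every 2×2 complex unitary U written (up to a global phase) as U = [[a, b], [−conj(b), conj(a)]] with |a|² + |b|² = 1, and every θ ∈ ℝ: 1 − H(|(U ψ_θ)₀|²) ≤ H(|a|²). That is, for qubit unitary operations the cohering power in the relative entropy of coherence is always at least the de-cohering power: C_r(U) = H(|a|²) ≥ 1 − H(1/2 + |a||b|) = D_r(U); equivalently H(|a|²) + H(1/2 + |a||b|) ≥ 1. -/

import Mathlib

open Matrix BigOperators ComplexOrder

/-- The l1-coherence of a matrix: the sum of the absolute values of its
off-diagonal entries. -/
noncomputable def Cl1 {n : ℕ} (A : Matrix (Fin n) (Fin n) ℂ) : ℝ :=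
  ∑ i, ∑ j, if i ≠ j then ‖A i j‖ else 0

/-- A density matrix: positive semidefinite with trace 1. -/
def IsDensity {n : ℕ} (ρ : Matrix (Fin n) (Fin n) ℂ) : Prop :=
  ρ.PosSemidef ∧ ρ.trace = 1

/-- A quantum operation (CPTP map) given by a finite family of Kraus operators. -/
def IsQuantumOp {n : ℕ} (Φ : Matrix (Fin n) (Fin n) ℂ → Matrix (Fin n) (Fin n) ℂ) : Prop :=
  ∃ (m : ℕ) (K : Fin m → Matrix (Fin n) (Fin n) ℂ),
    (∑ i, (K i)ᴴ * K i) = 1 ∧ ∀ ρ, Φ ρ = ∑ i, K i * ρ * (K i)ᴴ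

/-- The dephasing map `Δ`, keeping only the diagonal part of a matrix. -/
def Deph {n : ℕ} (A : Matrix (Fin n) (Fin n) ℂ) : Matrix (Fin n) (Fin n) ℂ :=
  Matrix.of fun i j => if i = j then A i j else 0

/-- The maximally coherent qubit state vector `(1/√2)(1, e^{iθ})`. -/
noncomputable def psi (θ : ℝ) : Fin 2 → ℂ :=
  ![1 / (Real.sqrt 2 : ℂ), Complex.exp (θ * Complex.I) / (Real.sqrt 2 : ℂ)]

/-- The outer product `w w†` of a vector with itself. -/
def outer {n : ℕ} (w : Fin n → ℂ) : Matrix (Fin n) (Fin n) ℂ :=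
  Matrix.vecMulVec w (star w)

/-- The qubit unitary `[[a, b], [-conj b, conj a]]`. -/
def Uab (a b : ℂ) : Matrix (Fin 2) (Fin 2) ℂ :=
  !![a, b; -(starRingEnd ℂ) b, (starRingEnd ℂ) a]

/-- The binary entropy (base 2), with the convention `0 · log 0 = 0`. -/
noncomputable def H (x : ℝ) : ℝ :=
  -(x * Real.logb 2 x) - (1 - x) * Real.logb 2 (1 - x)

/-- Integral of `d / (c + t * d)` over `[0,1]` when the denominator stays positive. -/
lemma integral_div_linear (c d : ℝ) (hpos : ∀ t ∈ Set.Icc (0:ℝ) 1, 0 < c + t * d) :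
    ∫ t in (0:ℝ)..1, d / (c + t * d) = Real.log (c + d) - Real.log c := by
  have h01 : Set.uIcc (0:ℝ) 1 = Set.Icc 0 1 := by
    rw [Set.uIcc_of_le]; norm_num
  have hderiv : ∀ t ∈ Set.uIcc (0:ℝ) 1,
      HasDerivAt (fun t => Real.log (c + t * d)) (d / (c + t * d)) t := by
    intro t ht
    rw [h01] at ht
    have hne : c + t * d ≠ 0 := (hpos t ht).ne'
    have h1 : HasDerivAt (fun t : ℝ => c + t * d) d t := by
      simpa using ((hasDerivAt_id t).mul_const d).const_add c
    have := (Real.hasDerivAt_log hne).comp t h1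
    rw [div_eq_inv_mul]; exact this
  have hcont : ContinuousOn (fun t => d / (c + t * d)) (Set.uIcc (0:ℝ) 1) := by
    rw [h01]
    exact ContinuousOn.div continuousOn_const (by fun_prop)
      (fun t ht => (hpos t ht).ne')
  have h := intervalIntegral.integral_eq_sub_of_hasDerivAt hderiv
    hcont.intervalIntegrable
  simpa using h

/-- The key analytic inequality (in nats): `-p log p - q log q ≥ 4 log 2 · p q`. -/
lemma key_nats (p : ℝ) (hp : 0 < p) (hp1 : p < 1) :
    4 * Real.log 2 * (p * (1 - p)) ≤ -(p * Real.log p) - (1 - p) * Real.log (1 - p) := by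
  set q := 1 - p with hq_def
  have hq : 0 < q := by simp [hq_def]; linarith
  have hA : ∀ t ∈ Set.Icc (0:ℝ) 1, 0 < p + t * q := fun t ht => by
    nlinarith [ht.1, ht.2]
  have hB : ∀ t ∈ Set.Icc (0:ℝ) 1, 0 < q + t * p := fun t ht => by
    nlinarith [ht.1, ht.2]
  have hC : ∀ t ∈ Set.Icc (0:ℝ) 1, 0 < 1 + t * 1 := fun t ht => by nlinarith [ht.1]
  have I1 : ∫ t in (0:ℝ)..1, q / (p + t * q) = -Real.log p := by
    have := integral_div_linear p q hA
    rw [this]; rw [show p + q = 1 by rw [hq_def]; ring]; simp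
  have I2 : ∫ t in (0:ℝ)..1, p / (q + t * p) = -Real.log q := by
    have := integral_div_linear q p hB
    rw [this]; rw [show q + p = 1 by rw [hq_def]; ring]; simp
  have I3 : ∫ t in (0:ℝ)..1, (1:ℝ) / (1 + t * 1) = Real.log 2 := by
    have := integral_div_linear 1 1 hC
    rw [this]; norm_num
  have h01 : Set.uIcc (0:ℝ) 1 = Set.Icc 0 1 := by rw [Set.uIcc_of_le]; norm_num
  have intA : IntervalIntegrable (fun t => q / (p + t * q)) MeasureTheory.volume 0 1 := by
    apply ContinuousOn.intervalIntegrable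
    rw [h01]
    exact ContinuousOn.div continuousOn_const (by fun_prop) (fun t ht => (hA t ht).ne')
  have intB : IntervalIntegrable (fun t => p / (q + t * p)) MeasureTheory.volume 0 1 := by
    apply ContinuousOn.intervalIntegrable
    rw [h01]
    exact ContinuousOn.div continuousOn_const (by fun_prop) (fun t ht => (hB t ht).ne')
  have intC : IntervalIntegrable (fun t => 4 * (p * q) * (1 / (1 + t * 1)))
      MeasureTheory.volume 0 1 := by
    apply ContinuousOn.intervalIntegrable
    rw [h01]
    exact ContinuousOn.mul continuousOn_const
      (ContinuousOn.div continuousOn_const (by fun_prop) (fun t ht => (hC t ht).ne'))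
  have intAB : IntervalIntegrable
      (fun t => p * (q / (p + t * q)) + q * (p / (q + t * p)))
      MeasureTheory.volume 0 1 :=
    (intA.const_mul p).add (intB.const_mul q)
  have hmono : ∫ t in (0:ℝ)..1, 4 * (p * q) * (1 / (1 + t * 1))
      ≤ ∫ t in (0:ℝ)..1, (p * (q / (p + t * q)) + q * (p / (q + t * p))) := by
    apply intervalIntegral.integral_mono_on (by norm_num) intC intAB
    intro t ht
    have hA' := hA t ht
    have hB' := hB t ht
    have hAB : (p + t * q) + (q + t * p) = 1 + t * 1 := by rw [hq_def]; ring
    have key : 4 * (p * q) * (1 / (1 + t * 1)) ≤ p * q / (p + t * q) + p * q / (q + t * p) := by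
      rw [div_add_div _ _ hA'.ne' hB'.ne', mul_one_div,
        div_le_div_iff₀ (by nlinarith [ht.1]) (by positivity), ← hAB]
      nlinarith [sq_nonneg ((p + t * q) - (q + t * p)), mul_pos hp hq, hAB,
        mul_nonneg (mul_pos hp hq).le (sq_nonneg ((p + t * q) - (q + t * p)))]
    calc 4 * (p * q) * (1 / (1 + t * 1)) ≤ p * q / (p + t * q) + p * q / (q + t * p) := key
      _ = p * (q / (p + t * q)) + q * (p / (q + t * p)) := by ring
  have expand : ∫ t in (0:ℝ)..1, (p * (q / (p + t * q)) + q * (p / (q + t * p)))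
      = -(p * Real.log p) - q * Real.log q := by
    rw [intervalIntegral.integral_add (intA.const_mul p) (intB.const_mul q),
      intervalIntegral.integral_const_mul, intervalIntegral.integral_const_mul, I1, I2]
    ring
  have lhs_eq : ∫ t in (0:ℝ)..1, 4 * (p * q) * (1 / (1 + t * 1))
      = 4 * Real.log 2 * (p * q) := by
    rw [intervalIntegral.integral_const_mul, I3]
    ring
  rw [lhs_eq, expand] at hmono
  exact hmono

/-- Binary entropy dominates `4x(1-x)` on `[0,1]`. -/
lemma H_ge_quad (x : ℝ) (h0 : 0 ≤ x) (h1 : x ≤ 1) : 4 * x * (1 - x) ≤ H x := by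
  rcases eq_or_lt_of_le h0 with h | h0'
  · simp [H, ← h]
  rcases eq_or_lt_of_le h1 with h | h1'
  · simp [H, h]
  have key := key_nats x h0' h1'
  have hlog2 : 0 < Real.log 2 := Real.log_pos (by norm_num)
  unfold H
  rw [Real.logb, Real.logb]
  have : -(x * (Real.log x / Real.log 2)) - (1 - x) * (Real.log (1 - x) / Real.log 2)
      = (-(x * Real.log x) - (1 - x) * Real.log (1 - x)) / Real.log 2 := by ring
  rw [this, le_div_iff₀ hlog2]
  nlinarith [key]

theorem cohering_power_ge_decohering_power_relent_qubit
    (a b : ℂ) (hab : ‖a‖ ^ 2 + ‖b‖ ^ 2 = 1) :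
    (∀ θ : ℝ,
      1 - H (‖(Uab a b).mulVec (psi θ) 0‖ ^ 2) ≤ H (‖a‖ ^ 2)) ∧
    1 ≤ H (‖a‖ ^ 2) + H (1 / 2 + ‖a‖ * ‖b‖) := by
  have ha0 : (0:ℝ) ≤ ‖a‖ ^ 2 := by positivity
  have ha1 : ‖a‖ ^ 2 ≤ 1 := by nlinarith [sq_nonneg (‖b‖)]
  have hHa := H_ge_quad (‖a‖ ^ 2) ha0 ha1
  have htsq : (‖a‖ * ‖b‖) ^ 2
      = ‖a‖ ^ 2 * ‖b‖ ^ 2 := by ring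
  have ht14 : (‖a‖ * ‖b‖) ^ 2 ≤ 1 / 4 := by
    nlinarith [sq_nonneg (‖a‖ ^ 2 - ‖b‖ ^ 2)]
  have ht0 : 0 ≤ ‖a‖ * ‖b‖ := by positivity
  have ht12 : ‖a‖ * ‖b‖ ≤ 1 / 2 := by nlinarith
  constructor
  · intro θ
    have hmv : (Uab a b).mulVec (psi θ) 0
        = a / (Real.sqrt 2 : ℂ) + b * Complex.exp (θ * Complex.I) / (Real.sqrt 2 : ℂ) := by
      simp [Uab, psi, Matrix.mulVec, dotProduct, Fin.sum_univ_two]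
      ring
    set r : ℝ := (a * (starRingEnd ℂ) (b * Complex.exp (θ * Complex.I))).re with hr_def
    have habs : ‖(Uab a b).mulVec (psi θ) 0‖ ^ 2 = 1 / 2 + r := by
      rw [hmv, Complex.sq_norm, ← add_div, Complex.normSq_div, Complex.normSq_add]
      have h2 : Complex.normSq ((Real.sqrt 2 : ℝ) : ℂ) = 2 := by
        rw [Complex.normSq_ofReal]
        exact Real.mul_self_sqrt (by norm_num)
      rw [h2]
      have hna : Complex.normSq a = ‖a‖ ^ 2 := (Complex.sq_norm a).symm
      have hnb : Complex.normSq (b * Complex.exp (θ * Complex.I))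
          = ‖b‖ ^ 2 := by
        rw [Complex.normSq_mul, ← Complex.sq_norm, ← Complex.sq_norm]
        simp [Complex.norm_exp]
      rw [hna, hnb, hab, ← hr_def]
      ring
    have hrle : |r| ≤ ‖a‖ * ‖b‖ := by
      calc |r| ≤ ‖a * (starRingEnd ℂ) (b * Complex.exp (θ * Complex.I))‖ :=
            Complex.abs_re_le_norm _
        _ = ‖a‖ * ‖b‖ := by
            rw [norm_mul, Complex.norm_conj, norm_mul]
            simp [Complex.norm_exp]
    obtain ⟨hrl, hru⟩ := abs_le.mp hrle
    have hr2 : r ^ 2 ≤ (‖a‖ * ‖b‖) ^ 2 := by nlinarith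
    have hp0 : (0:ℝ) ≤ 1 / 2 + r := by nlinarith
    have hp1 : (1:ℝ) / 2 + r ≤ 1 := by nlinarith
    have hHp := H_ge_quad (1 / 2 + r) hp0 hp1
    rw [habs]
    nlinarith [hHp, hHa, hr2, htsq]
  · have hHt := H_ge_quad (1 / 2 + ‖a‖ * ‖b‖) (by linarith) (by linarith)
    nlinarith [hHa, hHt, htsq]
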